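/- If p/q is an odd-indexed continued-fraction convergent p_{2k+1}/q_{2k+1} of a positive irrational α, then p − αq < α − ⌊α⌋, and consequently the genitor g_α(p, q) = ⌊(α − ⌊α⌋)/(p − αq)⌋ is positive. -/

import Mathlib

open GenContFract

private lemma not_term_of_irr {α : ℝ} (hirr : Irrational α) (m : ℕ) :
    ¬(GenContFract.of α).TerminatedAt m := by
  intro h
  have hterm : (GenContFract.of α).Terminates := ⟨m, h⟩
  obtain ⟨r, hr⟩ := (GenContFract.terminates_iff_rat α).mp hterm
  exact hirr ⟨r, hr.symm⟩

private lemma den_mono_of {α : ℝ} : Monotone fun n => (GenContFract.of α).dens n :=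
  monotone_nat_of_le_succ fun n => GenContFract.of_den_mono

/-- An odd-indexed convergent `p/q = p_{2k+1}/q_{2k+1}` of a positive irrational `α`
satisfies `p − αq < α − ⌊α⌋`, hence its genitor is positive. -/
theorem odd_convergent_genitor_pos (α : ℝ) (hα : 0 < α) (hirr : Irrational α)
    (k : ℕ) (p q : ℝ)
    (hp : p = (GenContFract.of α).nums (2 * k + 1))
    (hq : q = (GenContFract.of α).dens (2 * k + 1)) :
    p - α * q < α - ⌊α⌋ ∧ 0 < ⌊(α - ⌊α⌋) / (p - α * q)⌋ := by
  set g := GenContFract.of α with hg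
  set n := 2 * k + 1 with hn
  -- non-termination
  have hnt : ∀ m, ¬g.TerminatedAt m := not_term_of_irr hirr
  -- fractional part of α is positive
  have hfrα : 0 < Int.fract α := by
    refine Int.fract_pos.mpr fun h => hirr ⟨(⌊α⌋ : ℚ), by push_cast; rw [← h]⟩
  -- get the stream value at n
  have hsn1 : IntFractPair.stream α (n + 1) ≠ none := by
    intro h
    exact hnt n (GenContFract.of_terminatedAt_n_iff_succ_nth_intFractPair_stream_eq_none.mpr h)
  obtain ⟨ifp_succ, hifp_succ⟩ := Option.ne_none_iff_exists'.mp hsn1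
  obtain ⟨ifp, hifp, hfr_ne, -⟩ :=
    GenContFract.IntFractPair.succ_nth_stream_eq_some_iff.mp hifp_succ
  have hfr_pos : 0 < ifp.fr :=
    lt_of_le_of_ne (GenContFract.IntFractPair.nth_stream_fr_nonneg hifp) (Ne.symm hfr_ne)
  have hfr_lt_one : ifp.fr < 1 := GenContFract.IntFractPair.nth_stream_fr_lt_one hifp
  have hfrinv : 1 < ifp.fr⁻¹ := ((one_lt_inv₀ hfr_pos).mpr hfr_lt_one)
  -- denominators
  have hq_eq : q = (g.contsAux (n + 1)).b := by
    rw [hq, GenContFract.den_eq_conts_b, GenContFract.nth_cont_eq_succ_nth_contAux]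
  have hpB_eq : (g.contsAux n).b = g.dens (2 * k) := by
    rw [GenContFract.den_eq_conts_b, GenContFract.nth_cont_eq_succ_nth_contAux]
  -- q positive
  have hq_pos : 0 < q := by
    rw [hq]
    have := GenContFract.succ_nth_fib_le_of_nth_den (v := α) (n := n) (Or.inr (hnt _))
    have hfib : (0 : ℝ) < (Nat.fib (n + 1) : ℝ) := by
      exact_mod_cast Nat.fib_pos.mpr (Nat.succ_pos n)
    linarith
  -- dens 1 = ⌊(fract α)⁻¹⌋
  have hfrα_ne : Int.fract α ≠ 0 := ne_of_gt hfrα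
  have hhead : g.s.head = some ⟨1, (⌊(Int.fract α)⁻¹⌋ : ℝ)⟩ := GenContFract.of_s_head hfrα_ne
  have hden1 : g.dens 1 = (⌊(Int.fract α)⁻¹⌋ : ℝ) := by
    have := GenContFract.first_den_eq (g := g) (gp := ⟨1, (⌊(Int.fract α)⁻¹⌋ : ℝ)⟩) hhead
    simpa using this
  -- key bound: (fract α)⁻¹ < den 1 + 1
  have hlt1 : (Int.fract α)⁻¹ < g.dens 1 + 1 := by
    rw [hden1]; exact Int.lt_floor_add_one _
  have hden1_le_q : g.dens 1 ≤ q := by rw [hq]; exact den_mono_of (by omega)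
  have hpB_ge : (1 : ℝ) ≤ (g.contsAux n).b := by
    rw [hpB_eq]
    have h0 : g.dens 0 = 1 := GenContFract.zeroth_den_eq_one
    calc (1:ℝ) = g.dens 0 := h0.symm
      _ ≤ g.dens (2 * k) := den_mono_of (Nat.zero_le _)
  -- the exact error formula
  have hsub := GenContFract.sub_convs_eq hifp
  simp only [if_neg hfr_ne] at hsub
  have hneg1 : ((-1 : ℝ)) ^ n = -1 := by
    rw [hn]; simpa using Odd.neg_one_pow ⟨k, by ring⟩
  set B := (g.contsAux (n + 1)).b with hB
  set pB := (g.contsAux n).b with hpB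
  have hformula : α - g.convs n = -1 / (B * (ifp.fr⁻¹ * B + pB)) := by
    rw [← hneg1]; exact hsub
  -- denominators positive
  have hBq : B = q := hq_eq.symm
  have hD_pos : 0 < ifp.fr⁻¹ * B + pB := by
    rw [hBq]; nlinarith
  have hB_pos : 0 < B := by rw [hBq]; exact hq_pos
  -- p - α q = 1 / (fr⁻¹ * B + pB)
  have hconv : g.convs n = p / q := by
    rw [GenContFract.conv_eq_num_div_den, ← hp, ← hq]
  have hpq : p - α * q = q / (B * (ifp.fr⁻¹ * B + pB)) := by
    have h1 : g.convs n - α = 1 / (B * (ifp.fr⁻¹ * B + pB)) := by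
      have := hformula
      field_simp at this ⊢
      linarith
    have h2 : (g.convs n - α) * q = q / (B * (ifp.fr⁻¹ * B + pB)) := by
      rw [h1]; ring
    rw [← h2, hconv]
    field_simp
  have hpq' : p - α * q = 1 / (ifp.fr⁻¹ * B + pB) := by
    rw [hpq, hBq]
    field_simp
  -- positivity of the error
  have herr_pos : 0 < p - α * q := by rw [hpq']; positivity
  -- the main inequality: 1/(fr⁻¹ B + pB) < fract α
  have hkey : (Int.fract α)⁻¹ < ifp.fr⁻¹ * B + pB := by
    have h1 : g.dens 1 ≤ B := by rw [hBq]; exact hden1_le_q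
    have hB_nonneg : (0:ℝ) ≤ B := le_of_lt hB_pos
    nlinarith
  have hmain : p - α * q < Int.fract α := by
    rw [hpq']
    rw [div_lt_iff₀ hD_pos] at *
    calc (1 : ℝ) = Int.fract α * (Int.fract α)⁻¹ := by field_simp
      _ < Int.fract α * (ifp.fr⁻¹ * B + pB) := by
          exact mul_lt_mul_of_pos_left hkey hfrα
  have hfract_eq : α - (⌊α⌋ : ℝ) = Int.fract α := (Int.self_sub_floor α)
  constructor
  · rw [hfract_eq]; exact hmain
  · have h1le : (1 : ℝ) ≤ (α - ⌊α⌋) / (p - α * q) := by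
      rw [hfract_eq, le_div_iff₀ herr_pos, one_mul]
      exact le_of_lt hmain
    have := Int.le_floor.mpr (by exact_mod_cast h1le : ((1:ℤ):ℝ) ≤ (α - ⌊α⌋) / (p - α * q))
    omega
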